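/- For any binary vector t ∈ F_2^n and any binary x ∈ {0,1}^n with Σ_{i∈Supp(t)} x_i even, the map f ↦ |f − x| (componentwise) maps the single parity polytope U(t) bijectively onto itself. -/

import Mathlib

open Finset

/-- Support of a binary vector. -/
def SuppZ {n : ℕ} (t : Fin n → ZMod 2) : Finset (Fin n) :=
  Finset.univ.filter (fun i => t i ≠ 0)

open Classical in
/-- Support of a real vector. -/
noncomputable def SuppR {n : ℕ} (p : Fin n → ℝ) : Finset (Fin n) :=
  Finset.univ.filter (fun i => p i ≠ 0)

/-- Single parity polytope U(t). -/
def parityPolytope {n : ℕ} (t : Fin n → ZMod 2) : Set (Fin n → ℝ) :=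
  {f | (∀ i, f i ∈ Set.Icc (0:ℝ) 1) ∧
    ∀ S ⊆ SuppZ t, Odd S.card →
      ∑ j ∈ S, f j + ∑ j ∈ SuppZ t \ S, (1 - f j) ≤ ((SuppZ t).card : ℝ) - 1}

/-- Fundamental polytope P(H). -/
def fundamentalPolytope {m n : ℕ} (H : Fin m → Fin n → ZMod 2) : Set (Fin n → ℝ) :=
  ⋂ i, parityPolytope (H i)

/-- The binary linear code C(H). -/
def code {m n : ℕ} (H : Fin m → Fin n → ZMod 2) : Set (Fin n → ZMod 2) :=
  {x | ∀ i, ∑ j, x j * H i j = 0}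

/-- Embedding of a binary vector into ℝ^n as a 0-1 vector. -/
def embed {n : ℕ} (x : Fin n → ZMod 2) : Fin n → ℝ := fun i => ((x i).val : ℝ)

/-- A vertex of a set: a point of the set not expressible as a proper convex
combination of two distinct points of the set. -/
def IsVertex {n : ℕ} (X : Set (Fin n → ℝ)) (f : Fin n → ℝ) : Prop :=
  f ∈ X ∧ ∀ g h : Fin n → ℝ, g ∈ X → h ∈ X → ∀ t : ℝ, 0 < t → t < 1 →
    (f = fun i => t * g i + (1 - t) * h i) → g = h

lemma zmod2_cases (a : ZMod 2) : a = 0 ∨ a = 1 := by revert a; decide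

lemma embed_eq {n : ℕ} (x : Fin n → ZMod 2) (i : Fin n) :
    embed x i = if x i = 1 then 1 else 0 := by
  rcases zmod2_cases (x i) with h | h
  · rw [if_neg (by rw [h]; decide)]; simp [embed, h]
  · rw [if_pos h]
    show ((x i).val : ℝ) = 1
    have h1 : (1 : ZMod 2).val = 1 := rfl
    rw [h, h1]; norm_num

lemma mapsTo_aux {n : ℕ} (t x : Fin n → ZMod 2)
    (hx : ∑ i ∈ SuppZ t, x i = 0) :
    Set.MapsTo (fun f i => |f i - embed x i|) (parityPolytope t) (parityPolytope t) := by
  classical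
  intro f hf
  obtain ⟨hbox, hineq⟩ := hf
  set A : Finset (Fin n) := (SuppZ t).filter (fun j => x j = 1) with hA
  have hAsub : A ⊆ SuppZ t := filter_subset _ _
  -- g values
  have hg1 : ∀ j ∈ A, |f j - embed x j| = 1 - f j := by
    intro j hj
    have hxj : x j = 1 := (mem_filter.mp hj).2
    rw [embed_eq, if_pos hxj, abs_sub_comm, abs_of_nonneg (by linarith [(hbox j).2])]
  have hg0 : ∀ j, j ∉ A → j ∈ SuppZ t → |f j - embed x j| = f j := by
    intro j hj hjs
    have hxj : x j = 0 := by
      rcases zmod2_cases (x j) with h | h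
      · exact h
      · exact absurd (mem_filter.mpr ⟨hjs, h⟩) hj
    rw [embed_eq, if_neg (by rw [hxj]; decide), sub_zero, abs_of_nonneg (hbox j).1]
  -- |A| is even
  have hAeven : Even A.card := by
    have : (∑ i ∈ SuppZ t, x i) = (A.card : ZMod 2) := by
      rw [← Finset.sum_filter_add_sum_filter_not (SuppZ t) (fun j => x j = 1) x]
      have h1 : ∑ i ∈ A, x i = (A.card : ZMod 2) := by
        rw [Finset.sum_congr rfl (fun i hi => (mem_filter.mp hi).2)]
        simp
        rfl
      have h2 : ∑ i ∈ (SuppZ t).filter (fun j => ¬ x j = 1), x i = 0 := by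
        apply Finset.sum_eq_zero
        intro i hi
        rcases zmod2_cases (x i) with h | h
        · exact h
        · exact absurd h (mem_filter.mp hi).2
      rw [h1, h2, add_zero]
    rw [this] at hx
    obtain ⟨k, hk⟩ := (ZMod.natCast_eq_zero_iff A.card 2).mp hx
    exact ⟨k, by omega⟩
  simp only [parityPolytope, Set.mem_setOf_eq]
  refine ⟨fun i => ?_, fun S hS hSodd => ?_⟩
  · rw [embed_eq]
    rcases (hbox i) with ⟨h0, h1⟩
    constructor
    · exact abs_nonneg _
    · split <;> rw [abs_le] <;> constructor <;> linarith
  · set S' : Finset (Fin n) := (S \ A) ∪ ((SuppZ t \ S) ∩ A) with hS'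
    have hdisj : Disjoint (S \ A) ((SuppZ t \ S) ∩ A) := by
      simp only [Finset.disjoint_left, mem_sdiff, mem_inter]
      tauto
    have hS'sub : S' ⊆ SuppZ t := by
      intro j hj
      simp only [hS', mem_union, mem_sdiff, mem_inter] at hj
      rcases hj with ⟨h, _⟩ | ⟨⟨h, _⟩, _⟩
      · exact hS h
      · exact h
    have hcompl : SuppZ t \ S' = (S ∩ A) ∪ ((SuppZ t \ S) \ A) := by
      ext j
      have hj1 : j ∈ S → j ∈ SuppZ t := fun h => hS h
      simp only [hS', mem_sdiff, mem_union, mem_inter, not_or, not_and]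
      tauto
    have hdisj2 : Disjoint (S ∩ A) ((SuppZ t \ S) \ A) := by
      simp only [Finset.disjoint_left, mem_sdiff, mem_inter]
      tauto
    -- cardinality parity
    have hcardS' : Odd S'.card := by
      have h1 : S'.card = (S \ A).card + ((SuppZ t \ S) ∩ A).card :=
        card_union_of_disjoint hdisj
      have h2 : (S \ A).card + (S ∩ A).card = S.card := by
        rw [← card_union_of_disjoint (Finset.sdiff_disjoint.mono_right inter_subset_right)]
        congr 1
        ext j; simp only [mem_union, mem_sdiff, mem_inter]; tauto
      have h3 : ((SuppZ t \ S) ∩ A).card + (S ∩ A).card = A.card := by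
        rw [← card_union_of_disjoint]
        · congr 1
          ext j
          have hj1 : j ∈ A → j ∈ SuppZ t := fun h => hAsub h
          simp only [mem_union, mem_sdiff, mem_inter]
          tauto
        · simp only [Finset.disjoint_left, mem_sdiff, mem_inter]; tauto
      rw [Nat.odd_iff] at hSodd ⊢
      rw [Nat.even_iff] at hAeven
      omega
    have key : ∑ j ∈ S, |f j - embed x j| + ∑ j ∈ SuppZ t \ S, (1 - |f j - embed x j|)
        = ∑ j ∈ S', f j + ∑ j ∈ SuppZ t \ S', (1 - f j) := by
      have e1 : ∑ j ∈ S, |f j - embed x j|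
          = ∑ j ∈ S ∩ A, (1 - f j) + ∑ j ∈ S \ A, f j := by
        rw [← Finset.sum_inter_add_sum_sdiff S A (fun j => |f j - embed x j|)]
        congr 1
        · exact Finset.sum_congr rfl fun j hj => hg1 j (mem_inter.mp hj).2
        · exact Finset.sum_congr rfl fun j hj =>
            hg0 j (mem_sdiff.mp hj).2 (hS (mem_sdiff.mp hj).1)
      have e2 : ∑ j ∈ SuppZ t \ S, (1 - |f j - embed x j|)
          = ∑ j ∈ (SuppZ t \ S) ∩ A, f j + ∑ j ∈ (SuppZ t \ S) \ A, (1 - f j) := by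
        rw [← Finset.sum_inter_add_sum_sdiff (SuppZ t \ S) A
          (fun j => 1 - |f j - embed x j|)]
        congr 1
        · refine Finset.sum_congr rfl fun j hj => ?_
          rw [hg1 j (mem_inter.mp hj).2]; ring
        · refine Finset.sum_congr rfl fun j hj => ?_
          rw [hg0 j (mem_sdiff.mp hj).2 (mem_sdiff.mp (mem_sdiff.mp hj).1).1]
      have e3 : ∑ j ∈ S', f j = ∑ j ∈ S \ A, f j + ∑ j ∈ (SuppZ t \ S) ∩ A, f j := by
        rw [hS', Finset.sum_union hdisj]
      have e4 : ∑ j ∈ SuppZ t \ S', (1 - f j)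
          = ∑ j ∈ S ∩ A, (1 - f j) + ∑ j ∈ (SuppZ t \ S) \ A, (1 - f j) := by
        rw [hcompl, Finset.sum_union hdisj2]
      rw [e1, e2, e3, e4]; ring
    rw [key]
    exact hineq S' hS'sub hcardS'

lemma invol_aux {n : ℕ} (t x : Fin n → ZMod 2) (f : Fin n → ℝ)
    (hf : f ∈ parityPolytope t) :
    (fun i => |(fun i => |f i - embed x i|) i - embed x i|) = f := by
  funext i
  obtain ⟨h0, h1⟩ := hf.1 i
  simp only
  rw [embed_eq]
  rcases zmod2_cases (x i) with h | h
  · rw [if_neg (by rw [h]; decide)]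
    rw [sub_zero, sub_zero, abs_abs, abs_of_nonneg h0]
  · rw [if_pos h]
    rw [abs_of_nonpos (by linarith : f i - 1 ≤ 0),
      show -(f i - 1) - 1 = -(f i) by ring, abs_neg, abs_of_nonneg h0]

theorem stmt18 {n : ℕ} (t x : Fin n → ZMod 2)
    (hx : ∑ i ∈ SuppZ t, x i = 0) :
    Set.BijOn (fun f i => |f i - embed x i|) (parityPolytope t) (parityPolytope t) := by
  have hm := mapsTo_aux t x hx
  have hinv : Set.InvOn (fun f i => |f i - embed x i|) (fun f i => |f i - embed x i|)
      (parityPolytope t) (parityPolytope t) :=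
    ⟨fun f hf => invol_aux t x f hf, fun f hf => invol_aux t x f hf⟩
  exact hinv.bijOn hm hm
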